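/- Let k ≥ 1 be an integer and let G be a triangle-free bar k-visibility graph. Then every connected component of G is a caterpillar; that is, G is a disjoint union of caterpillars. -/

import Mathlib

/-- Adjacency (before symmetrization) in the bar `k`-visibility representation
with bars `[l i, r i] × {y i}`: there is a vertical line of sight at abscissa `x`
between bars `i` and `j` crossing at most `k` intervening bars. -/
def barAdj (k : ℕ) {n : ℕ} (l r y : Fin n → ℝ) (i j : Fin n) : Prop :=
  ∃ x : ℝ, l i ≤ x ∧ x ≤ r i ∧ l j ≤ x ∧ x ≤ r j ∧
    ({m : Fin n | min (y i) (y j) < y m ∧ y m < max (y i) (y j) ∧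
        l m ≤ x ∧ x ≤ r m}.ncard ≤ k)

/-- The bar `k`-visibility graph of the representation `(l, r, y)`. -/
def barGraph (k : ℕ) {n : ℕ} (l r y : Fin n → ℝ) : SimpleGraph (Fin n) :=
  SimpleGraph.fromRel (barAdj k l r y)

/-- A graph is a bar `k`-visibility graph if it is isomorphic to the bar
`k`-visibility graph of some representation: finitely many nondegenerate bars
at pairwise distinct heights. -/
def IsBarKVisibilityGraph (k : ℕ) {V : Type*} (G : SimpleGraph V) : Prop :=
  ∃ (n : ℕ) (l r y : Fin n → ℝ), (∀ i, l i < r i) ∧ Function.Injective y ∧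
    Nonempty (G ≃g barGraph k l r y)

/-- A caterpillar: a tree containing a path such that every vertex is within
distance 1 of some vertex of the path. -/
def IsCaterpillar {W : Type*} (H : SimpleGraph W) : Prop :=
  H.IsTree ∧ ∃ (u v : W) (p : H.Walk u v), p.IsPath ∧
    ∀ w : W, ∃ x ∈ p.support, w = x ∨ H.Adj w x

namespace BarCat

open SimpleGraph

/-! ### Generic list/walk lemmas -/

lemma getVert_support_getElem? {V : Type*} {G : SimpleGraph V} {u v : V}
    (p : G.Walk u v) : ∀ {i : ℕ}, i ≤ p.length → p.support[i]? = some (p.getVert i) := by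
  induction p with
  | nil =>
    intro i hi
    have : i = 0 := Nat.le_zero.mp hi
    subst this
    simp [SimpleGraph.Walk.getVert]
  | cons h q ih =>
    intro i hi
    cases i with
    | zero => simp [SimpleGraph.Walk.getVert]
    | succ m =>
      rw [SimpleGraph.Walk.support_cons, List.getElem?_cons_succ,
        SimpleGraph.Walk.getVert_cons_succ]
      exact ih (by simpa [Nat.succ_le_succ_iff] using hi)

lemma cycle_getVert_ne {V : Type*} {G : SimpleGraph V} {a : V} {c : G.Walk a a}
    (hc : c.IsCycle) {i j : ℕ} (h1 : 1 ≤ i) (hij : i < j) (hj : j ≤ c.length) :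
    c.getVert i ≠ c.getVert j := by
  intro he
  obtain ⟨i', rfl⟩ : ∃ i', i = i' + 1 := ⟨i - 1, by omega⟩
  obtain ⟨j', rfl⟩ : ∃ j', j = j' + 1 := ⟨j - 1, by omega⟩
  have hlen : c.support.tail.length = c.length := by
    have h1 := c.length_support
    rw [c.support_eq_cons] at h1
    set_option linter.unnecessarySimpa false in simpa using h1
  have hi' : c.support.tail[i']? = some (c.getVert (i' + 1)) := by
    have h := getVert_support_getElem? c (i := i' + 1) (by omega)
    rw [c.support_eq_cons] at h
    rwa [List.getElem?_cons_succ] at h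
  have hj'' : c.support.tail[j']? = some (c.getVert (j' + 1)) := by
    have h := getVert_support_getElem? c (i := j' + 1) (by omega)
    rw [c.support_eq_cons] at h
    rwa [List.getElem?_cons_succ] at h
  have : i' = j' := by
    refine (List.getElem?_inj (by omega) hc.support_nodup).1 ?_
    rw [hi', hj'', he]
  omega

/-! ### Core caterpillar theory for "interval graphs of depth at most 2" -/

variable {W : Type*} {H : SimpleGraph W} {L R : W → ℝ}

lemma acyclic_core
    (hLR : ∀ v, L v ≤ R v)
    (hadj : ∀ u v, H.Adj u v ↔ u ≠ v ∧ L u ≤ R v ∧ L v ≤ R u)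
    (hdepth : ∀ (x : ℝ) (u v w : W), u ≠ v → u ≠ w → v ≠ w →
      L u ≤ x → x ≤ R u → L v ≤ x → x ≤ R v → L w ≤ x → x ≤ R w → False) :
    H.IsAcyclic := by
  classical
  intro v0 c0 hc0
  obtain ⟨a, ha, hamin⟩ := Finset.exists_min_image c0.support.toFinset L
    ⟨v0, List.mem_toFinset.2 c0.start_mem_support⟩
  rw [List.mem_toFinset] at ha
  replace hamin : ∀ m ∈ c0.support, L a ≤ L m :=
    fun m hm => hamin m (List.mem_toFinset.2 hm)
  set c : H.Walk a a := c0.rotate a ha with hcdef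
  have hc : c.IsCycle := hc0.rotate ha
  have hmin : ∀ m ∈ c.support, L a ≤ L m := by
    intro m hm
    rw [c.support_eq_cons] at hm
    rcases List.mem_cons.1 hm with h | h
    · exact h ▸ le_refl _
    · have : m ∈ c0.support.tail :=
        (List.IsRotated.mem_iff (SimpleGraph.Walk.support_rotate c0 a ha)).1 h
      exact hamin m (List.mem_of_mem_tail this)
  have hn3 : 3 ≤ c.length := hc.three_le_length
  set n := c.length with hn
  -- the relevant vertices
  set v1 := c.getVert 1 with hv1
  set v2 := c.getVert 2 with hv2
  set w1 := c.getVert (n - 1) with hw1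
  set w2 := c.getVert (n - 2) with hw2
  have hga : c.getVert 0 = a := c.getVert_zero
  have hgn : c.getVert n = a := c.getVert_length
  -- adjacencies
  have hav1 : H.Adj a v1 := by
    have := c.adj_getVert_succ (i := 0) (by omega)
    rwa [hga] at this
  have hv1v2 : H.Adj v1 v2 := c.adj_getVert_succ (i := 1) (by omega)
  have hw1a : H.Adj w1 a := by
    have := c.adj_getVert_succ (i := n - 1) (by omega)
    rwa [show n - 1 + 1 = n by omega, hgn] at this
  have hw2w1 : H.Adj w2 w1 := by
    have := c.adj_getVert_succ (i := n - 2) (by omega)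
    rwa [show n - 2 + 1 = n - 1 by omega] at this
  -- distinctness
  have hv1w1 : v1 ≠ w1 := cycle_getVert_ne hc (by omega) (by omega) (by omega)
  have hv2a : v2 ≠ a := by
    have := cycle_getVert_ne hc (i := 2) (j := n) (by omega) (by omega) (by omega)
    rwa [hgn] at this
  have hw2a : w2 ≠ a := by
    have := cycle_getVert_ne hc (i := n - 2) (j := n) (by omega) (by omega) (by omega)
    rwa [hgn] at this
  -- support membership
  have hv1mem : v1 ∈ c.support :=
    SimpleGraph.Walk.mem_support_iff_exists_getVert.2 ⟨1, rfl, by omega⟩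
  have hw1mem : w1 ∈ c.support :=
    SimpleGraph.Walk.mem_support_iff_exists_getVert.2 ⟨n - 1, rfl, by omega⟩
  -- interval facts from adjacency
  obtain ⟨hav1ne, hLaRv1, hLv1Ra⟩ := (hadj a v1).1 hav1
  obtain ⟨hw1ane, hLw1Ra, hLaRw1⟩ := (hadj w1 a).1 hw1a
  by_cases hcross : L v1 ≤ R w1 ∧ L w1 ≤ R v1
  · -- the two neighbours of a intersect: common point of a, v1, w1
    set x := max (L v1) (L w1) with hx
    exact hdepth x a v1 w1 hav1ne (Ne.symm hw1ane) hv1w1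
      (le_trans (hmin v1 hv1mem) (le_max_left _ _))
      (max_le hLv1Ra hLw1Ra)
      (le_max_left _ _) (max_le (hLR v1) hcross.2)
      (le_max_right _ _) (max_le hcross.1 (hLR w1))
  · rcases not_and_or.1 hcross with hsep | hsep
    · -- R w1 < L v1 : w1 is contained in a, use w2
      push_neg at hsep
      obtain ⟨hw2w1ne, hLw2Rw1, hLw1Rw2⟩ := (hadj w2 w1).1 hw2w1
      set x := max (L w1) (L w2) with hx
      exact hdepth x a w1 w2 (Ne.symm hw1ane) (Ne.symm hw2a) (Ne.symm hw2w1ne)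
        (le_trans (hmin w1 hw1mem) (le_max_left _ _))
        (le_trans (max_le (hLR w1) hLw2Rw1) (le_trans hsep.le hLv1Ra))
        (le_max_left _ _) (max_le (hLR w1) hLw2Rw1)
        (le_max_right _ _) (max_le hLw1Rw2 (hLR w2))
    · -- R v1 < L w1 : v1 is contained in a, use v2
      push_neg at hsep
      obtain ⟨hv1v2ne, hLv1Rv2, hLv2Rv1⟩ := (hadj v1 v2).1 hv1v2
      set x := max (L v1) (L v2) with hx
      exact hdepth x a v1 v2 hav1ne (Ne.symm hv2a) hv1v2ne
        (le_trans (hmin v1 hv1mem) (le_max_left _ _))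
        (le_trans (max_le (hLR v1) hLv2Rv1) (le_trans hsep.le hLw1Ra))
        (le_max_left _ _) (max_le (hLR v1) hLv2Rv1)
        (le_max_right _ _) (max_le hLv1Rv2 (hLR v2))

lemma walk_cover
    (hadj : ∀ u v, H.Adj u v ↔ u ≠ v ∧ L u ≤ R v ∧ L v ≤ R u)
    {x y : W} (p : H.Walk x y) (t : ℝ) :
    L x ≤ t → t ≤ R y → ∃ z ∈ p.support, L z ≤ t ∧ t ≤ R z := by
  induction p with
  | nil => intro h1 h2; exact ⟨_, by simp, h1, h2⟩
  | @cons u u' y' h q ih =>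
    intro h1 h2
    by_cases hu : t ≤ R u
    · exact ⟨u, by simp, h1, hu⟩
    · push_neg at hu
      have hLu' : L u' ≤ t := le_trans ((hadj u u').1 h).2.2 hu.le
      obtain ⟨z, hz, h3, h4⟩ := ih hLu' h2
      exact ⟨z, by simp [hz], h3, h4⟩

lemma caterpillar_core [Fintype W]
    (hLR : ∀ v, L v ≤ R v)
    (hadj : ∀ u v, H.Adj u v ↔ u ≠ v ∧ L u ≤ R v ∧ L v ≤ R u)
    (hdepth : ∀ (x : ℝ) (u v w : W), u ≠ v → u ≠ w → v ≠ w →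
      L u ≤ x → x ≤ R u → L v ≤ x → x ≤ R v → L w ≤ x → x ≤ R w → False)
    (hconn : H.Connected) :
    IsCaterpillar H := by
  classical
  have hNE : Nonempty W := hconn.nonempty
  refine ⟨⟨hconn, acyclic_core hLR hadj hdepth⟩, ?_⟩
  obtain ⟨a, -, hamin⟩ := Finset.exists_min_image (Finset.univ : Finset W) L
    ⟨Classical.arbitrary W, Finset.mem_univ _⟩
  obtain ⟨b, -, hbmax⟩ := Finset.exists_max_image (Finset.univ : Finset W) R
    ⟨Classical.arbitrary W, Finset.mem_univ _⟩
  obtain ⟨q⟩ := hconn a b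
  refine ⟨a, b, q.toPath.1, q.toPath.2, ?_⟩
  intro w
  obtain ⟨z, hz, h3, h4⟩ := walk_cover hadj q.toPath.1 (L w)
    (hamin w (Finset.mem_univ _)) (le_trans (hLR w) (hbmax w (Finset.mem_univ _)))
  refine ⟨z, hz, ?_⟩
  by_cases hwz : w = z
  · exact Or.inl hwz
  · exact Or.inr ((hadj w z).2 ⟨hwz, h4, le_trans h3 (hLR w)⟩)

/-! ### Depth at most 2 from triangle-freeness -/

lemma depth_le_two {k n : ℕ} (hk : 1 ≤ k) {l r y : Fin n → ℝ}
    (hy : Function.Injective y)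
    (hfree : (barGraph k l r y).CliqueFree 3) :
    ∀ (x : ℝ) (a b c : Fin n), a ≠ b → a ≠ c → b ≠ c →
      l a ≤ x → x ≤ r a → l b ≤ x → x ≤ r b → l c ≤ x → x ≤ r c → False := by
  intro x a0 b0 c0 hab0 hac0 hbc0 ha1 ha2 hb1 hb2 hc1 hc2
  classical
  set S : Finset (Fin n) := Finset.univ.filter (fun m => l m ≤ x ∧ x ≤ r m) with hS
  have hmemS : ∀ m, m ∈ S ↔ (l m ≤ x ∧ x ≤ r m) := by
    intro m; simp [hS]
  have hcard3 : 3 ≤ S.card := by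
    have hsub : ({a0, b0, c0} : Finset (Fin n)) ⊆ S := by
      intro m hm
      simp only [Finset.mem_insert, Finset.mem_singleton] at hm
      rcases hm with rfl | rfl | rfl
      · exact (hmemS m).2 ⟨ha1, ha2⟩
      · exact (hmemS m).2 ⟨hb1, hb2⟩
      · exact (hmemS m).2 ⟨hc1, hc2⟩
    have h3 : ({a0, b0, c0} : Finset (Fin n)).card = 3 := by
      rw [Finset.card_insert_of_notMem (by simp [hab0, hac0]),
        Finset.card_insert_of_notMem (by simp [hbc0]), Finset.card_singleton]
    have := Finset.card_le_card hsub
    omega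
  -- pick the three lowest bars through `x`
  obtain ⟨a, haS, hamin⟩ := Finset.exists_min_image S y
    ⟨a0, (hmemS a0).2 ⟨ha1, ha2⟩⟩
  have hcard2 : 2 ≤ (S.erase a).card := by
    rw [Finset.card_erase_of_mem haS]; omega
  obtain ⟨b, hbSe, hbmin⟩ := Finset.exists_min_image (S.erase a) y
    (Finset.card_pos.1 (by omega))
  have hcard1 : 1 ≤ ((S.erase a).erase b).card := by
    rw [Finset.card_erase_of_mem hbSe]; omega
  obtain ⟨c, hcSe, hcmin⟩ := Finset.exists_min_image ((S.erase a).erase b) y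
    (Finset.card_pos.1 (by omega))
  obtain ⟨hba, hbS⟩ := Finset.mem_erase.1 hbSe
  obtain ⟨hcb, hcSe'⟩ := Finset.mem_erase.1 hcSe
  obtain ⟨hca, hcS⟩ := Finset.mem_erase.1 hcSe'
  have hyab : y a < y b :=
    lt_of_le_of_ne (hamin b hbS) (fun h => hba (hy h.symm))
  have hybc : y b < y c :=
    lt_of_le_of_ne (hbmin c hcSe') (fun h => hcb (hy h.symm))
  have hyac : y a < y c := hyab.trans hybc
  -- adjacency of the two lowest bars
  have adj_ab : (barGraph k l r y).Adj a b := by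
    refine (SimpleGraph.fromRel_adj _ _ _).2 ⟨Ne.symm hba, Or.inl ?_⟩
    refine ⟨x, ((hmemS a).1 haS).1, ((hmemS a).1 haS).2,
      ((hmemS b).1 hbS).1, ((hmemS b).1 hbS).2, ?_⟩
    have hempty : {m : Fin n | min (y a) (y b) < y m ∧ y m < max (y a) (y b) ∧
        l m ≤ x ∧ x ≤ r m} = ∅ := by
      ext m
      simp only [Set.mem_setOf_eq, Set.mem_empty_iff_false, iff_false, not_and]
      rw [min_eq_left hyab.le, max_eq_right hyab.le]
      intro h1 h2 h3 h4
      have hmS : m ∈ S := (hmemS m).2 ⟨h3, h4⟩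
      have hma : m ≠ a := fun h => absurd (h ▸ h1) (lt_irrefl _)
      exact absurd (hbmin m (Finset.mem_erase.2 ⟨hma, hmS⟩)) (not_le.2 h2)
    rw [hempty, Set.ncard_empty]
    omega
  have adj_bc : (barGraph k l r y).Adj b c := by
    refine (SimpleGraph.fromRel_adj _ _ _).2 ⟨Ne.symm hcb, Or.inl ?_⟩
    refine ⟨x, ((hmemS b).1 hbS).1, ((hmemS b).1 hbS).2,
      ((hmemS c).1 hcS).1, ((hmemS c).1 hcS).2, ?_⟩
    have hempty : {m : Fin n | min (y b) (y c) < y m ∧ y m < max (y b) (y c) ∧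
        l m ≤ x ∧ x ≤ r m} = ∅ := by
      ext m
      simp only [Set.mem_setOf_eq, Set.mem_empty_iff_false, iff_false, not_and]
      rw [min_eq_left hybc.le, max_eq_right hybc.le]
      intro h1 h2 h3 h4
      have hmS : m ∈ S := (hmemS m).2 ⟨h3, h4⟩
      have hmb : m ≠ b := fun h => absurd (h ▸ h1) (lt_irrefl _)
      have hma : m ≠ a := fun h => absurd (h ▸ (hyab.trans h1)) (lt_irrefl _)
      exact absurd (hcmin m (Finset.mem_erase.2 ⟨hmb, Finset.mem_erase.2 ⟨hma, hmS⟩⟩))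
        (not_le.2 h2)
    rw [hempty, Set.ncard_empty]
    omega
  have adj_ac : (barGraph k l r y).Adj a c := by
    refine (SimpleGraph.fromRel_adj _ _ _).2 ⟨Ne.symm hca, Or.inl ?_⟩
    refine ⟨x, ((hmemS a).1 haS).1, ((hmemS a).1 haS).2,
      ((hmemS c).1 hcS).1, ((hmemS c).1 hcS).2, ?_⟩
    have hsub : {m : Fin n | min (y a) (y c) < y m ∧ y m < max (y a) (y c) ∧
        l m ≤ x ∧ x ≤ r m} ⊆ {b} := by
      rintro m ⟨h1, h2, h3, h4⟩
      rw [min_eq_left hyac.le] at h1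
      rw [max_eq_right hyac.le] at h2
      have hmS : m ∈ S := (hmemS m).2 ⟨h3, h4⟩
      by_contra hmb
      rw [Set.mem_singleton_iff] at hmb
      have hma : m ≠ a := fun h => absurd (h ▸ h1) (lt_irrefl _)
      exact absurd (hcmin m (Finset.mem_erase.2 ⟨hmb, Finset.mem_erase.2 ⟨hma, hmS⟩⟩))
        (not_le.2 h2)
    have := Set.ncard_le_ncard hsub (Set.finite_singleton b)
    rw [Set.ncard_singleton] at this
    omega
  exact hfree {a, b, c} (SimpleGraph.is3Clique_triple_iff.2 ⟨adj_ab, adj_ac, adj_bc⟩)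

lemma reachable_induce {V : Type*} {G : SimpleGraph V} {s : Set V} :
    ∀ {u v : V} (p : G.Walk u v), (∀ z ∈ p.support, z ∈ s) → ∀ (hu : u ∈ s) (hv : v ∈ s),
      (G.induce s).Reachable ⟨u, hu⟩ ⟨v, hv⟩ := by
  intro u v p
  induction p with
  | nil => intro _ hu hv; exact SimpleGraph.Reachable.refl _
  | @cons a b w h q ih =>
    intro hp hu hv
    have hb : b ∈ s := hp b (by simp)
    have hadj : (G.induce s).Adj ⟨a, hu⟩ ⟨b, hb⟩ := h
    exact hadj.reachable.trans (ih (fun z hz => hp z (by simp [hz])) hb hv)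

end BarCat

/-- For `k ≥ 1`, every triangle-free bar `k`-visibility graph is a disjoint
union of caterpillars: each of its connected components is a caterpillar. -/
theorem triangleFree_bar_k_visibility_caterpillar (k : ℕ) (hk : 1 ≤ k)
    {V : Type*} [Fintype V] (G : SimpleGraph V)
    (htri : G.CliqueFree 3) (hbar : IsBarKVisibilityGraph k G) :
    ∀ c : G.ConnectedComponent, IsCaterpillar (G.induce c.supp) := by
  classical
  obtain ⟨n, l, r, y, hlr, hy, ⟨e⟩⟩ := hbar
  have hfree : (barGraph k l r y).CliqueFree 3 := htri.comap e.symm.isContained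
  have hdepthFin := BarCat.depth_le_two hk hy hfree
  set L : V → ℝ := fun v => l (e v) with hLdef
  set R : V → ℝ := fun v => r (e v) with hRdef
  have hLR : ∀ v, L v ≤ R v := fun v => (hlr (e v)).le
  have hadjG : ∀ u v, G.Adj u v ↔ u ≠ v ∧ L u ≤ R v ∧ L v ≤ R u := by
    intro u v
    constructor
    · intro h
      have hb : (barGraph k l r y).Adj (e u) (e v) := e.map_adj_iff.2 h
      obtain ⟨hne, hx⟩ := (SimpleGraph.fromRel_adj _ _ _).1 hb
      have hex : ∃ x : ℝ, l (e u) ≤ x ∧ x ≤ r (e u) ∧ l (e v) ≤ x ∧ x ≤ r (e v) := by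
        rcases hx with ⟨x, h1, h2, h3, h4, -⟩ | ⟨x, h3, h4, h1, h2, -⟩
        · exact ⟨x, h1, h2, h3, h4⟩
        · exact ⟨x, h1, h2, h3, h4⟩
      obtain ⟨x, h1, h2, h3, h4⟩ := hex
      exact ⟨h.ne, le_trans h1 h4, le_trans h3 h2⟩
    · rintro ⟨hne, h1, h2⟩
      set x := max (L u) (L v) with hxdef
      have hxu1 : l (e u) ≤ x := le_max_left _ _
      have hxu2 : x ≤ r (e u) := max_le (hLR u) h2
      have hxv1 : l (e v) ≤ x := le_max_right _ _
      have hxv2 : x ≤ r (e v) := max_le h1 (hLR v)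
      have hene : e u ≠ e v := fun h' => hne (e.toEquiv.injective h')
      have hempty : {m : Fin n | min (y (e u)) (y (e v)) < y m ∧
          y m < max (y (e u)) (y (e v)) ∧ l m ≤ x ∧ x ≤ r m} = ∅ := by
        ext m
        simp only [Set.mem_setOf_eq, Set.mem_empty_iff_false, iff_false, not_and]
        intro hm1 hm2 hm3 hm4
        have hmu : m ≠ e u := by
          rintro rfl
          rcases le_total (y (e u)) (y (e v)) with hle | hle
          · rw [min_eq_left hle] at hm1; exact lt_irrefl _ hm1
          · rw [max_eq_left hle] at hm2; exact lt_irrefl _ hm2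
        have hmv : m ≠ e v := by
          rintro rfl
          rcases le_total (y (e u)) (y (e v)) with hle | hle
          · rw [max_eq_right hle] at hm2; exact lt_irrefl _ hm2
          · rw [min_eq_right hle] at hm1; exact lt_irrefl _ hm1
        exact hdepthFin x (e u) (e v) m hene (Ne.symm hmu) (Ne.symm hmv)
          hxu1 hxu2 hxv1 hxv2 hm3 (hm4)
      have hbadj : barAdj k l r y (e u) (e v) :=
        ⟨x, hxu1, hxu2, hxv1, hxv2, by rw [hempty, Set.ncard_empty]; omega⟩
      exact e.map_adj_iff.1 ((SimpleGraph.fromRel_adj _ _ _).2 ⟨hene, Or.inl hbadj⟩)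
  have hdepthG : ∀ (x : ℝ) (u v w : V), u ≠ v → u ≠ w → v ≠ w →
      L u ≤ x → x ≤ R u → L v ≤ x → x ≤ R v → L w ≤ x → x ≤ R w → False := by
    intro x u v w d1 d2 d3 a1 a2 a3 a4 a5 a6
    exact hdepthFin x (e u) (e v) (e w)
      (fun h => d1 (e.toEquiv.injective h))
      (fun h => d2 (e.toEquiv.injective h))
      (fun h => d3 (e.toEquiv.injective h)) a1 a2 a3 a4 a5 a6
  intro c
  haveI : Fintype ↥c.supp := Fintype.ofFinite _
  refine BarCat.caterpillar_core (L := fun v : ↥c.supp => L ↑v)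
    (R := fun v : ↥c.supp => R ↑v) (fun v => hLR ↑v) ?_ ?_ ?_
  · intro u v
    have hiff : (G.induce c.supp).Adj u v ↔ G.Adj ↑u ↑v := Iff.rfl
    rw [hiff, hadjG]
    constructor
    · rintro ⟨d1, d2, d3⟩
      exact ⟨fun hh => d1 (congrArg Subtype.val hh), d2, d3⟩
    · rintro ⟨d1, d2, d3⟩
      exact ⟨fun hh => d1 (Subtype.ext hh), d2, d3⟩
  · intro x u v w d1 d2 d3 a1 a2 a3 a4 a5 a6
    exact hdepthG x ↑u ↑v ↑w
      (fun h => d1 (Subtype.ext h)) (fun h => d2 (Subtype.ext h))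
      (fun h => d3 (Subtype.ext h)) a1 a2 a3 a4 a5 a6
  · obtain ⟨v0, hv0⟩ := c.exists_rep
    have hv0mem : v0 ∈ c.supp := by
      rw [SimpleGraph.ConnectedComponent.mem_supp_iff]; exact hv0
    haveI : Nonempty ↥c.supp := ⟨⟨v0, hv0mem⟩⟩
    constructor
    rintro ⟨u, hu⟩ ⟨v, hv⟩
    have hu' := (SimpleGraph.ConnectedComponent.mem_supp_iff _ _).1 hu
    have hv' := (SimpleGraph.ConnectedComponent.mem_supp_iff _ _).1 hv
    have hr : G.Reachable u v :=
      SimpleGraph.ConnectedComponent.exact (hu'.trans hv'.symm)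
    obtain ⟨q⟩ := hr
    refine BarCat.reachable_induce q ?_ hu hv
    intro z hz
    have hreach : G.Reachable u z := (q.takeUntil z hz).reachable
    rw [SimpleGraph.ConnectedComponent.mem_supp_iff, ← hu']
    exact (SimpleGraph.ConnectedComponent.eq.2 hreach).symm
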